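/- Let d ≥ 1 be an integer and let σ ∈ (0,1) be real. There exists a constant C > 0, depending only on d and σ, such that for all s ≥ 0: ∫_{s^{1/(1−σ)}}^∞ ρ^{d−1} e^{−ρ^{1−σ}} dρ ≤ C e^{−s} (1 + s^{(d−1+σ)/(1−σ)}). -/

import Mathlib

open MeasureTheory Real Set Filter Topology

/-- The stretched-exponential tail estimate from Appendix B.2 of the paper: for
`d ≥ 1` and `σ ∈ (0,1)` there is a constant `C > 0` depending only on `d` and `σ`
such that for all `s ≥ 0`,
`∫_{s^{1/(1−σ)}}^∞ ρ^{d−1} e^{−ρ^{1−σ}} dρ ≤ C e^{−s} (1 + s^{(d−1+σ)/(1−σ)})`. -/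
theorem stretched_exponential_tail_estimate (d : ℕ) (hd : 1 ≤ d)
    (σ : ℝ) (hσ : σ ∈ Set.Ioo (0 : ℝ) 1) :
    ∃ C : ℝ, 0 < C ∧ ∀ s : ℝ, 0 ≤ s →
      (∫ ρ in Set.Ioi (s ^ (1 / (1 - σ))), ρ ^ (d - 1) * Real.exp (-(ρ ^ (1 - σ)))) ≤
        C * Real.exp (-s) * (1 + s ^ ((d - 1 + σ) / (1 - σ))) := by
  obtain ⟨hσ0, hσ1⟩ := hσ
  have h1σ : (0:ℝ) < 1 - σ := by linarith
  set α : ℝ := ((d:ℝ) - 1 + σ) / (1 - σ) with hα_def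
  have hα : 0 < α := by
    apply div_pos _ h1σ
    have : (1:ℝ) ≤ (d:ℝ) := by exact_mod_cast hd
    linarith
  set n : ℕ := ⌈α⌉₊ with hn_def
  set M : ℝ := 1 + 2 ^ n * (n.factorial : ℝ) with hM_def
  have hM1 : 1 ≤ M := by
    have : (0:ℝ) ≤ 2 ^ n * (n.factorial : ℝ) := by positivity
    linarith
  have hM0 : 0 < M := by linarith
  -- key scalar bound : for 0 ≤ s ≤ t, t^α * exp (-(t/2)) ≤ 2^α * M * (1 + s^α) * exp (-(s/2))
  have tbound : ∀ s t : ℝ, 0 ≤ s → s ≤ t →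
      t ^ α * Real.exp (-(t/2)) ≤ (2:ℝ) ^ α * M * (1 + s ^ α) * Real.exp (-(s/2)) := by
    intro s t hs hst
    have ht : 0 ≤ t := hs.trans hst
    set u : ℝ := t - s with hu_def
    have hu : 0 ≤ u := by simp only [hu_def]; linarith
    have h1 : t ^ α ≤ (2:ℝ) ^ α * (s ^ α + u ^ α) := by
      have hmax : t ≤ 2 * max s u := by
        rcases le_total s u with h | h
        · nlinarith [le_max_right s u]
        · nlinarith [le_max_left s u]
      calc t ^ α ≤ (2 * max s u) ^ α :=
            Real.rpow_le_rpow ht hmax hα.le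
        _ = 2 ^ α * (max s u) ^ α := Real.mul_rpow (by norm_num) (le_max_of_le_left hs)
        _ ≤ 2 ^ α * (s ^ α + u ^ α) := by
            gcongr 2 ^ α * ?_
            rcases max_cases s u with ⟨h, _⟩ | ⟨h, _⟩ <;> rw [h]
            · nlinarith [Real.rpow_nonneg hu α]
            · nlinarith [Real.rpow_nonneg hs α]
    have hexp : Real.exp (-(t/2)) = Real.exp (-(s/2)) * Real.exp (-(u/2)) := by
      rw [← Real.exp_add]; congr 1; simp only [hu_def]; ring
    have h2 : u ^ α * Real.exp (-(u/2)) ≤ M := by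
      have hcase : u ^ α ≤ 1 + u ^ n := by
        rcases le_total u 1 with h | h
        · have h1' := Real.rpow_le_one hu h hα.le
          have h2' : (0:ℝ) ≤ u ^ n := by positivity
          linarith
        · have h1n : u ^ α ≤ u ^ (n:ℝ) :=
            Real.rpow_le_rpow_of_exponent_le h (Nat.le_ceil α)
          rw [Real.rpow_natCast] at h1n
          linarith
      have hup : u ^ n ≤ 2 ^ n * (n.factorial : ℝ) * Real.exp (u/2) := by
        have h0 := Real.pow_div_factorial_le_exp (u/2) (by positivity) n
        have hfac : (0:ℝ) < (n.factorial : ℝ) := by positivity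
        rw [div_le_iff₀ hfac, div_pow] at h0
        have h2n : (0:ℝ) < 2 ^ n := by positivity
        rw [div_le_iff₀ h2n] at h0
        calc u ^ n ≤ Real.exp (u/2) * (n.factorial:ℝ) * 2 ^ n := h0
          _ = 2 ^ n * (n.factorial : ℝ) * Real.exp (u/2) := by ring
      have he2 : Real.exp (u/2) * Real.exp (-(u/2)) = 1 := by
        rw [← Real.exp_add]; simp
      have he : Real.exp (-(u/2)) ≤ 1 := Real.exp_le_one_iff.2 (by linarith)
      calc u ^ α * Real.exp (-(u/2)) ≤ (1 + u ^ n) * Real.exp (-(u/2)) :=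
            mul_le_mul_of_nonneg_right hcase (Real.exp_pos _).le
        _ = Real.exp (-(u/2)) + u ^ n * Real.exp (-(u/2)) := by ring
        _ ≤ 1 + (2 ^ n * (n.factorial : ℝ) * Real.exp (u/2)) * Real.exp (-(u/2)) := by
            gcongr
        _ = M := by rw [hM_def, mul_assoc, mul_assoc, he2, mul_one]
    have h3 : (s ^ α + u ^ α) * Real.exp (-(u/2)) ≤ s ^ α + M := by
      have he : Real.exp (-(u/2)) ≤ 1 := Real.exp_le_one_iff.2 (by linarith)
      nlinarith [Real.rpow_nonneg hs α, (Real.exp_pos (-(u/2))).le]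
    have h4 : s ^ α + M ≤ M * (1 + s ^ α) := by
      nlinarith [Real.rpow_nonneg hs α]
    have h2α : (0:ℝ) < (2:ℝ) ^ α := Real.rpow_pos_of_pos (by norm_num) α
    calc t ^ α * Real.exp (-(t/2))
        ≤ ((2:ℝ) ^ α * (s ^ α + u ^ α)) * Real.exp (-(t/2)) :=
          mul_le_mul_of_nonneg_right h1 (Real.exp_pos _).le
      _ = (2:ℝ) ^ α * ((s ^ α + u ^ α) * Real.exp (-(u/2))) * Real.exp (-(s/2)) := by
          rw [hexp]; ring
      _ ≤ (2:ℝ) ^ α * (s ^ α + M) * Real.exp (-(s/2)) := by gcongr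
      _ ≤ (2:ℝ) ^ α * (M * (1 + s ^ α)) * Real.exp (-(s/2)) := by gcongr
      _ = (2:ℝ) ^ α * M * (1 + s ^ α) * Real.exp (-(s/2)) := by ring
  refine ⟨(2:ℝ) ^ α * M * (2 / (1 - σ)),
    by positivity, ?_⟩
  intro s hs
  set a : ℝ := s ^ (1 / (1 - σ)) with ha_def
  have ha : 0 ≤ a := Real.rpow_nonneg hs _
  have haσ : a ^ (1 - σ) = s := by
    rw [ha_def, ← Real.rpow_mul hs, one_div_mul_cancel h1σ.ne', Real.rpow_one]
  -- the antiderivative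
  set F : ℝ → ℝ := fun ρ => -((2 / (1 - σ)) * Real.exp (-(ρ ^ (1 - σ) / 2))) with hF_def
  set g : ℝ → ℝ := fun ρ => ρ ^ (-σ) * Real.exp (-(ρ ^ (1 - σ) / 2)) with hg_def
  have hcont : ContinuousWithinAt F (Ici a) a := by
    apply ContinuousAt.continuousWithinAt
    have h1 : ContinuousAt (fun ρ : ℝ => ρ ^ (1 - σ)) a :=
      Real.continuousAt_rpow_const a (1 - σ) (Or.inr h1σ.le)
    exact (((h1.div_const 2).neg.rexp).const_mul _).neg
  have hderiv : ∀ x ∈ Ioi a, HasDerivAt F (g x) x := by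
    intro x hx
    have hx0 : 0 < x := lt_of_le_of_lt ha hx
    have h1 : HasDerivAt (fun ρ : ℝ => ρ ^ (1 - σ)) ((1 - σ) * x ^ (1 - σ - 1)) x :=
      Real.hasDerivAt_rpow_const (Or.inl hx0.ne')
    have h2 := (((h1.div_const 2).fun_neg.exp).const_mul (2 / (1 - σ))).fun_neg
    refine h2.congr_deriv ?_
    rw [hg_def]
    have : (1 - σ - 1) = -σ := by ring
    rw [this]
    field_simp
  have gpos : ∀ x ∈ Ioi a, 0 ≤ g x := by
    intro x hx
    have hx0 : 0 < x := lt_of_le_of_lt ha hx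
    rw [hg_def]
    positivity
  have hFlim : Tendsto F atTop (𝓝 0) := by
    have h1 : Tendsto (fun ρ : ℝ => ρ ^ (1 - σ)) atTop atTop := tendsto_rpow_atTop h1σ
    have h2 : Tendsto (fun ρ : ℝ => -(ρ ^ (1 - σ) / 2)) atTop atBot :=
      tendsto_neg_atTop_atBot.comp (h1.atTop_div_const (by norm_num))
    have h3 : Tendsto (fun ρ : ℝ => Real.exp (-(ρ ^ (1 - σ) / 2))) atTop (𝓝 0) :=
      Real.tendsto_exp_atBot.comp h2
    have h4 := ((h3.const_mul (2 / (1 - σ))).neg)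
    simpa using h4
  have hg_eq : ∫ x in Ioi a, g x = (2 / (1 - σ)) * Real.exp (-(s/2)) := by
    rw [integral_Ioi_of_hasDerivAt_of_nonneg hcont hderiv gpos hFlim]
    rw [hF_def]
    simp only [haσ]
    ring
  have hg_int : IntegrableOn g (Ioi a) :=
    integrableOn_Ioi_deriv_of_nonneg hcont hderiv gpos hFlim
  set K : ℝ := (2:ℝ) ^ α * M * (1 + s ^ α) * Real.exp (-(s/2)) with hK_def
  have hK0 : 0 ≤ K := by
    have := Real.rpow_nonneg hs α
    positivity
  set f : ℝ → ℝ := fun ρ => ρ ^ (d - 1) * Real.exp (-(ρ ^ (1 - σ))) with hf_def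
  have hfg : ∀ x ∈ Ioi a, f x ≤ K * g x := by
    intro x hx
    have hx0 : 0 < x := lt_of_le_of_lt ha hx
    set t : ℝ := x ^ (1 - σ) with ht_def
    have hts : s ≤ t := by
      rw [ht_def, ← haσ]
      exact Real.rpow_le_rpow ha hx.le h1σ.le
    have hxd : (x : ℝ) ^ (d - 1) = t ^ α * x ^ (-σ) := by
      rw [ht_def, ← Real.rpow_mul hx0.le]
      rw [← Real.rpow_natCast x (d - 1), ← Real.rpow_add hx0]
      congr 1
      rw [Nat.cast_sub hd, Nat.cast_one]
      rw [hα_def]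
      field_simp
      ring
    have hexp : Real.exp (-t) = Real.exp (-(t/2)) * Real.exp (-(t/2)) := by
      rw [← Real.exp_add]; ring_nf
    have key := tbound s t hs hts
    calc f x = (t ^ α * Real.exp (-(t/2))) * (x ^ (-σ) * Real.exp (-(t/2))) := by
          rw [hf_def]
          simp only [← ht_def]
          rw [hxd, hexp]
          ring
      _ ≤ ((2:ℝ) ^ α * M * (1 + s ^ α) * Real.exp (-(s/2))) * (x ^ (-σ) * Real.exp (-(t/2))) := by
          apply mul_le_mul_of_nonneg_right key
          positivity
      _ = K * g x := by rw [hK_def, hg_def]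
  have hf_int : IntegrableOn f (Ioi a) := by
    apply Integrable.mono' (hg_int.const_mul K)
    · apply Measurable.aestronglyMeasurable
      fun_prop
    · rw [ae_restrict_iff' measurableSet_Ioi]
      filter_upwards with x
      intro hx
      have hx0 : 0 < x := lt_of_le_of_lt ha hx
      rw [Real.norm_eq_abs, abs_of_nonneg (by rw [hf_def]; positivity)]
      exact hfg x hx
  calc (∫ ρ in Ioi a, f ρ) ≤ ∫ ρ in Ioi a, K * g ρ := by
        apply setIntegral_mono_on hf_int (hg_int.const_mul K) measurableSet_Ioi hfg
    _ = K * ((2 / (1 - σ)) * Real.exp (-(s/2))) := by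
        rw [integral_const_mul, hg_eq]
    _ = ((2:ℝ) ^ α * M * (2 / (1 - σ))) * Real.exp (-s) * (1 + s ^ α) := by
        rw [hK_def]
        rw [show Real.exp (-s) = Real.exp (-(s/2)) * Real.exp (-(s/2)) by
          rw [← Real.exp_add]; ring_nf]
        ring
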